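/- Let n ≥ 5 be an integer and let N = Z/4Z × Z/2^{n-2}Z. Then Hol(N) contains no regular subgroup isomorphic to the generalised quaternion group Q_{2^n} (QuaternionGroup 2^{n-2}) and no regular subgroup isomorphic to the dihedral group D_{2^n} (DihedralGroup 2^{n-1}). -/

import Mathlib

/-- The (multiplicative) automorphism group structure on `AddAut N`, as in the older Mathlib. -/
instance AddAut.instGroupOld (A : Type) [Add A] : Group (AddAut A) where
  mul g h := AddEquiv.trans h g
  one := AddEquiv.refl _
  inv := AddEquiv.symm
  mul_assoc _ _ _ := rfl
  one_mul _ := rfl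
  mul_one _ := rfl
  inv_mul_cancel := AddEquiv.self_trans_symm

lemma addAut_mulOld_apply {A : Type} [Add A] (f g : AddAut A) (x : A) : (f * g) x = f (g x) := rfl

lemma addAut_oneOld_apply {A : Type} [Add A] (x : A) : (1 : AddAut A) x = x := rfl

abbrev M2 := (ZMod 4 × ZMod 4) × (ZMod 4 × ZMod 4)

def mmul (X Y : M2) : M2 :=
  ((X.1.1*Y.1.1 + X.1.2*Y.2.1, X.1.1*Y.1.2 + X.1.2*Y.2.2),
   (X.2.1*Y.1.1 + X.2.2*Y.2.1, X.2.1*Y.1.2 + X.2.2*Y.2.2))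
def madd (X Y : M2) : M2 := ((X.1.1+Y.1.1, X.1.2+Y.1.2),(X.2.1+Y.2.1, X.2.2+Y.2.2))
def mone : M2 := ((1,0),(0,1))
def mdet (X : M2) : ZMod 4 := X.1.1*X.2.2 - X.1.2*X.2.1
def mact (X : M2) (v : ZMod 4 × ZMod 4) : ZMod 4 × ZMod 4 :=
  (X.1.1*v.1 + X.1.2*v.2, X.2.1*v.1 + X.2.2*v.2)
def msum (X : M2) : M2 := madd (madd mone X) (madd (mmul X X) (mmul X (mmul X X)))

lemma mact_mmul (X Y : M2) (v : ZMod 4 × ZMod 4) : mact (mmul X Y) v = mact X (mact Y v) := by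
  simp only [mact, mmul, Prod.mk.injEq]; constructor <;> ring

lemma mact_madd (X Y : M2) (v : ZMod 4 × ZMod 4) : mact (madd X Y) v = mact X v + mact Y v := by
  simp only [mact, madd, Prod.mk.injEq, Prod.mk_add_mk]; constructor <;> ring

lemma mact_one (v : ZMod 4 × ZMod 4) : mact mone v = v := by
  simp only [mact, mone]; cases v; simp

lemma mdet_mmul (X Y : M2) : mdet (mmul X Y) = mdet X * mdet Y := by
  simp only [mdet, mmul]; ring

lemma mext (X Y : M2) (h1 : mact X (1,0) = mact Y (1,0)) (h2 : mact X (0,1) = mact Y (0,1)) :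
    X = Y := by
  simp only [mact, Prod.mk.injEq, mul_one, mul_zero, add_zero, zero_add] at h1 h2
  obtain ⟨⟨a,b⟩,c,d⟩ := X; obtain ⟨⟨a',b'⟩,c',d'⟩ := Y
  simp_all

set_option maxRecDepth 10000 in
lemma key_matrix : ∀ X : M2, 2 * X.2.1 = 0 → (∃ u, mdet X * u = 1) →
    mmul (mmul (mmul X X) X) X = mone ∧
    2 * (msum X).1.1 = 0 ∧ 2 * (msum X).1.2 = 0 ∧ (msum X).2.1 = 0 ∧ (msum X).2.2 = 0 := by
  decide

section
variable {m : ℕ}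

lemma two_pow_ne_zero' : (2:ℕ)^m ≠ 0 := pow_ne_zero m two_ne_zero

lemma four_dvd_two_pow (hm : 2 ≤ m) : (4:ℕ) ∣ 2^m := by
  have : (2:ℕ)^2 ∣ 2^m := pow_dvd_pow 2 hm
  simpa using this

/-- reduction `ZMod (2^m) → ZMod 4` -/
noncomputable def r4 (hm : 2 ≤ m) : ZMod (2^m) →+ ZMod 4 :=
  (ZMod.castHom (four_dvd_two_pow hm) (ZMod 4)).toAddMonoidHom

/-- reduction `N → (ZMod 4)²` -/
noncomputable def piN (hm : 2 ≤ m) : (ZMod 4 × ZMod (2^m)) →+ (ZMod 4 × ZMod 4) :=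
  AddMonoidHom.prodMap (AddMonoidHom.id _) (r4 hm)

lemma piN_apply (hm : 2 ≤ m) (z : ZMod 4 × ZMod (2^m)) :
    piN hm z = (z.1, ZMod.castHom (four_dvd_two_pow hm) (ZMod 4) z.2) := rfl

-- kernel of piN is 4N
lemma piN_ker (hm : 2 ≤ m) (z : ZMod 4 × ZMod (2^m)) (h : piN hm z = 0) :
    ∃ w, z = 4 • w := by
  haveI : NeZero ((2:ℕ)^m) := ⟨two_pow_ne_zero'⟩
  rw [piN_apply, Prod.mk_eq_zero] at h
  obtain ⟨h1, h2⟩ := h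
  rw [ZMod.castHom_apply, ← ZMod.natCast_val, ZMod.natCast_eq_zero_iff] at h2
  refine ⟨(0, ((z.2.val / 4 : ℕ) : ZMod (2^m))), ?_⟩
  have : ((4 * (z.2.val / 4) : ℕ) : ZMod (2^m)) = z.2 := by
    rw [Nat.mul_div_cancel' h2, ZMod.natCast_val, ZMod.cast_id]
  ext
  · simpa using h1
  · show z.2 = 4 • ((z.2.val / 4 : ℕ) : ZMod (2^m))
    rw [nsmul_eq_mul]
    conv_lhs => rw [← this]
    push_cast; ring
end

section
variable {m : ℕ}

lemma torsion_cast (hm : 3 ≤ m) (z : ZMod (2^m)) (h : 4 • z = 0) :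
    2 * ZMod.castHom (four_dvd_two_pow (by omega)) (ZMod 4) z = 0 := by
  haveI : NeZero ((2:ℕ)^m) := ⟨two_pow_ne_zero'⟩
  have h4 : ((4 * z.val : ℕ) : ZMod (2^m)) = 0 := by
    push_cast
    rw [ZMod.natCast_val, ZMod.cast_id]
    rw [nsmul_eq_mul] at h
    push_cast at h
    exact h
  rw [ZMod.natCast_eq_zero_iff] at h4
  have h2 : 2 ∣ z.val := by
    have he : (2:ℕ)^m = 4 * 2^(m-2) := by
      rw [show m = 2 + (m-2) by omega, pow_add]; norm_num
    obtain ⟨k, hk⟩ := h4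
    have hk' : 4 * ZMod.val z = 4 * (2^(m-2) * k) := by rw [hk, he]; ring
    have hval : ZMod.val z = 2^(m-2) * k := Nat.eq_of_mul_eq_mul_left (by norm_num) hk'
    have : (2:ℕ) ∣ 2^(m-2) := dvd_pow_self 2 (by omega : m - 2 ≠ 0)
    exact hval ▸ Dvd.dvd.mul_right this k
  rw [ZMod.castHom_apply, ← ZMod.natCast_val]
  have : (2 * (z.val : ZMod 4)) = ((2 * z.val : ℕ) : ZMod 4) := by push_cast; ring
  rw [this, ZMod.natCast_eq_zero_iff]
  omega
noncomputable def Bmat (hm : 2 ≤ m) (A : AddAut (ZMod 4 × ZMod (2^m))) : M2 :=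
  (((piN hm (A (1,0))).1, (piN hm (A (0,1))).1),
   ((piN hm (A (1,0))).2, (piN hm (A (0,1))).2))

lemma decomp (v : ZMod 4 × ZMod (2^m)) :
    v = v.1.val • ((1:ZMod 4), (0:ZMod (2^m))) + v.2.val • ((0:ZMod 4), (1:ZMod (2^m))) := by
  haveI : NeZero ((2:ℕ)^m) := ⟨two_pow_ne_zero'⟩
  ext
  · simp [nsmul_eq_mul, ZMod.natCast_val, ZMod.cast_id]
  · simp [nsmul_eq_mul, ZMod.natCast_val, ZMod.cast_id]

lemma piN_semiconj (hm : 2 ≤ m) (A : AddAut (ZMod 4 × ZMod (2^m)))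
    (v : ZMod 4 × ZMod (2^m)) :
    piN hm (A v) = mact (Bmat hm A) (piN hm v) := by
  haveI : NeZero ((2:ℕ)^m) := ⟨two_pow_ne_zero'⟩
  conv_lhs => rw [decomp v, map_add, map_nsmul, map_nsmul, map_add, map_nsmul, map_nsmul]
  ext
  · simp only [Prod.fst_add, Prod.smul_fst, piN_apply, Bmat, mact]
    simp only [nsmul_eq_mul, ZMod.natCast_val, ZMod.cast_id, ZMod.castHom_apply]
    ring
  · simp only [Prod.snd_add, Prod.smul_snd, piN_apply, Bmat, mact]
    simp only [nsmul_eq_mul, ZMod.natCast_val, ZMod.cast_id, ZMod.castHom_apply]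
    ring
end

section
variable {m : ℕ}

lemma zmod4_even (u : ZMod 4) (h : 2 * u = 0) : ∃ s, u = 2 * s := by revert u h; decide

lemma cast4_zero (hm : 2 ≤ m) (z : ZMod (2^m))
    (h : ZMod.castHom (four_dvd_two_pow hm) (ZMod 4) z = 0) : ∃ t, z = 4 * t := by
  obtain ⟨w, hw⟩ := piN_ker hm (0, z) (by rw [piN_apply]; simp [h])
  refine ⟨w.2, ?_⟩
  have := congrArg Prod.snd hw
  simpa [nsmul_eq_mul] using this

lemma pow_apply_succ (A : AddAut (ZMod 4 × ZMod (2^m))) (k : ℕ) (x) :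
    (A^(k+1)) x = A ((A^k) x) := by
  rw [pow_succ', addAut_mulOld_apply]

lemma Bmat_c (hm : 3 ≤ m) (A : AddAut (ZMod 4 × ZMod (2^m))) :
    2 * (Bmat (by omega) A).2.1 = 0 := by
  have h40 : (4:ℕ) • (((1:ZMod 4), (0:ZMod (2^m)))) = 0 := by
    ext
    · show (4:ℕ) • (1 : ZMod 4) = 0; decide
    · simp
  have h : (4:ℕ) • (A (1,0)) = 0 := by rw [← map_nsmul, h40, map_zero]
  have h2 : (4:ℕ) • (A (1,0)).2 = 0 := by rw [← Prod.smul_snd, h]; rfl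
  exact torsion_cast hm _ h2

lemma Bmat_inv (hm : 2 ≤ m) (A : AddAut (ZMod 4 × ZMod (2^m))) :
    mmul (Bmat hm A) (Bmat hm A.symm) = mone := by
  haveI : NeZero ((2:ℕ)^m) := ⟨two_pow_ne_zero'⟩
  apply mext
  · have h1 : ((1:ZMod 4),(0:ZMod 4)) = piN hm ((1:ZMod 4),(0:ZMod (2^m))) := by
      rw [piN_apply]; simp
    rw [mact_mmul, mact_one, h1, ← piN_semiconj, ← piN_semiconj]
    simp
  · have h1 : ((0:ZMod 4),(1:ZMod 4)) = piN hm ((0:ZMod 4),(1:ZMod (2^m))) := by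
      rw [piN_apply, map_one]
    rw [mact_mmul, mact_one, h1, ← piN_semiconj, ← piN_semiconj]
    simp

lemma Bmat_det (hm : 2 ≤ m) (A : AddAut (ZMod 4 × ZMod (2^m))) :
    ∃ u, mdet (Bmat hm A) * u = 1 :=
  ⟨mdet (Bmat hm A.symm), by rw [← mdet_mmul, Bmat_inv]; decide⟩
end

section
variable {m : ℕ}

lemma pow4_form (hm : 3 ≤ m) (A : AddAut (ZMod 4 × ZMod (2^m)))
    (z : ZMod 4 × ZMod (2^m)) : ∃ w, (A^4) z = z + 4 • w := by
  have h2 : 2 ≤ m := by omega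
  have key := (key_matrix (Bmat h2 A) (Bmat_c hm A) (Bmat_det h2 A)).1
  have e2 : ∀ y, (A^2) y = A (A y) := fun y => by
    show (A^(1+1)) y = _; rw [pow_apply_succ, pow_one]
  have e3 : ∀ y, (A^3) y = A (A (A y)) := fun y => by
    show (A^(2+1)) y = _; rw [pow_apply_succ, e2]
  have e : (A^4) z = A (A (A (A z))) := by
    show (A^(3+1)) z = _; rw [pow_apply_succ, e3]
  have hπ : piN h2 ((A^4) z) = piN h2 z := by
    rw [e, piN_semiconj, piN_semiconj, piN_semiconj, piN_semiconj,
      ← mact_mmul, ← mact_mmul, ← mact_mmul, key, mact_one]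
  obtain ⟨w, hw⟩ := piN_ker h2 ((A^4) z - z) (by rw [map_sub, hπ, sub_self])
  exact ⟨w, by rw [← hw]; abel⟩

lemma pow2j_form (hm : 3 ≤ m) (A : AddAut (ZMod 4 × ZMod (2^m))) :
    ∀ j, 2 ≤ j → ∀ z, ∃ w, (A^(2^j)) z = z + 4 • w := by
  intro j
  induction j with
  | zero => omega
  | succ j ih =>
    intro hj z
    rcases Nat.lt_or_ge j 2 with hj2 | hj2
    · have hj1 : j = 1 := by omega
      subst hj1
      have : (2:ℕ)^2 = 4 := rfl
      rw [this]
      exact pow4_form hm A z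
    · have e : (A^(2^(j+1))) z = (A^(2^j)) ((A^(2^j)) z) := by
        rw [show (2:ℕ)^(j+1) = 2^j + 2^j by rw [pow_succ]; ring, pow_add, addAut_mulOld_apply]
      obtain ⟨w1, h1⟩ := ih hj2 z
      refine ⟨w1 + (A^(2^j)) w1, ?_⟩
      rw [e, h1, map_add, map_nsmul, h1, smul_add]
      abel

lemma sum_double (A : AddAut (ZMod 4 × ZMod (2^m))) (k : ℕ) (x : ZMod 4 × ZMod (2^m)) :
    ∑ i ∈ Finset.range (2^(k+1)), (A^i) x
      = (∑ i ∈ Finset.range (2^k), (A^i) x)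
        + (A^(2^k)) (∑ i ∈ Finset.range (2^k), (A^i) x) := by
  rw [show (2:ℕ)^(k+1) = 2^k + 2^k by rw [pow_succ]; ring, Finset.sum_range_add]
  congr 1
  rw [map_sum]
  refine Finset.sum_congr rfl fun i _ => ?_
  rw [pow_add, addAut_mulOld_apply]

lemma sum4_form (hm : 3 ≤ m) (A : AddAut (ZMod 4 × ZMod (2^m)))
    (x : ZMod 4 × ZMod (2^m)) :
    ∃ s t, (∑ i ∈ Finset.range 4, (A^i) x)
      = 2 • ((s, 2*t) : ZMod 4 × ZMod (2^m)) := by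
  have h2 : 2 ≤ m := by omega
  have key := key_matrix (Bmat h2 A) (Bmat_c hm A) (Bmat_det h2 A)
  set B := Bmat h2 A with hB
  set S := ∑ i ∈ Finset.range 4, (A^i) x with hS
  have hexp : S = x + A x + A (A x) + A (A (A x)) := by
    have e2 : ∀ y : ZMod 4 × ZMod (2^m), (A^2) y = A (A y) := fun y => by
      show (A^(1+1)) y = _; rw [pow_apply_succ, pow_one]
    have e3 : ∀ y : ZMod 4 × ZMod (2^m), (A^3) y = A (A (A y)) := fun y => by
      show (A^(2+1)) y = _; rw [pow_apply_succ, e2]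
    rw [hS, Finset.sum_range_succ, Finset.sum_range_succ, Finset.sum_range_succ,
      Finset.sum_range_one, pow_zero, addAut_oneOld_apply, pow_one, e2, e3]
  have hπ : piN h2 S = mact (msum B) (piN h2 x) := by
    rw [hexp, map_add, map_add, map_add, piN_semiconj, piN_semiconj, piN_semiconj,
      piN_semiconj, piN_semiconj, piN_semiconj]
    simp only [msum, mact_madd, mact_one, mact_mmul]
    abel
  have hfst : S.1 = (mact (msum B) (piN h2 x)).1 := congrArg Prod.fst hπ
  have hsnd : ZMod.castHom (four_dvd_two_pow h2) (ZMod 4) S.2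
      = (mact (msum B) (piN h2 x)).2 := congrArg Prod.snd hπ
  have h1 : 2 * S.1 = 0 := by
    rw [hfst]
    show 2 * ((msum B).1.1 * (piN h2 x).1 + (msum B).1.2 * (piN h2 x).2) = 0
    calc 2 * ((msum B).1.1 * (piN h2 x).1 + (msum B).1.2 * (piN h2 x).2)
        = (2 * (msum B).1.1) * (piN h2 x).1 + (2 * (msum B).1.2) * (piN h2 x).2 := by ring
      _ = 0 := by rw [key.2.1, key.2.2.1]; ring
  have h2' : ZMod.castHom (four_dvd_two_pow h2) (ZMod 4) S.2 = 0 := by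
    rw [hsnd]
    show (msum B).2.1 * (piN h2 x).1 + (msum B).2.2 * (piN h2 x).2 = 0
    rw [key.2.2.2.1, key.2.2.2.2]; ring
  obtain ⟨s, hs⟩ := zmod4_even S.1 h1
  obtain ⟨t, ht⟩ := cast4_zero h2 S.2 h2'
  refine ⟨s, t, ?_⟩
  ext
  · show S.1 = (2 • ((s, 2*t) : ZMod 4 × ZMod (2^m))).1
    rw [Prod.smul_fst, hs, nsmul_eq_mul]; push_cast; ring
  · show S.2 = (2 • ((s, 2*t) : ZMod 4 × ZMod (2^m))).2
    rw [Prod.smul_snd, ht, nsmul_eq_mul]; push_cast; ring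
end

section
variable {m : ℕ}

lemma sum_form (hm : 3 ≤ m) (A : AddAut (ZMod 4 × ZMod (2^m))) :
    ∀ k, 2 ≤ k → ∀ x, ∃ s t, ∑ i ∈ Finset.range (2^k), (A^i) x
      = 2^(k-1) • ((s, 2*t) : ZMod 4 × ZMod (2^m)) := by
  intro k
  induction k with
  | zero => omega
  | succ k ih =>
    intro hk x
    rcases Nat.lt_or_ge k 2 with hk2 | hk2
    · have hk1 : k = 1 := by omega
      subst hk1
      obtain ⟨s, t, hst⟩ := sum4_form hm A x
      exact ⟨s, t, by rw [show (2:ℕ)^(1+1) = 4 from rfl, hst]; norm_num⟩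
    · obtain ⟨j, hj⟩ : ∃ j, k = j + 1 := ⟨k - 1, by omega⟩
      subst hj
      obtain ⟨s, t, hst⟩ := ih (by omega) x
      rw [sum_double, hst]
      set y : ZMod 4 × ZMod (2^m) := (s, 2*t) with hy
      obtain ⟨w, hw⟩ := pow2j_form hm A (j+1) (by omega) y
      rw [map_nsmul, hw]
      refine ⟨s + 2*w.1, t + w.2, ?_⟩
      have hpair : ((s + 2*w.1, 2*(t + w.2)) : ZMod 4 × ZMod (2^m)) = y + 2 • w := by
        ext
        · show s + 2*w.1 = y.1 + (2 • w).1
          rw [Prod.smul_fst, hy, nsmul_eq_mul]; push_cast; ring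
        · show 2*(t + w.2) = y.2 + (2 • w).2
          rw [Prod.smul_snd, hy, nsmul_eq_mul]; push_cast; ring
      rw [show (j+1+1-1) = (j+1) from rfl, hpair]
      rw [smul_add, smul_add, ← add_assoc, ← add_nsmul, smul_smul]
      rw [show (j+1-1) = j from rfl]
      congr 1
      · rw [show (2:ℕ)^j + 2^j = 2^(j+1) by rw [pow_succ]; ring]
      · rw [show (2:ℕ)^j * 4 = 2^(j+1) * 2 by rw [pow_succ]; ring, mul_smul]

theorem key_sum (hm : 3 ≤ m) (A : AddAut (ZMod 4 × ZMod (2^m)))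
    (x : ZMod 4 × ZMod (2^m)) :
    ∑ i ∈ Finset.range (2^m), (A^i) x = 0 := by
  haveI : NeZero ((2:ℕ)^m) := ⟨two_pow_ne_zero'⟩
  obtain ⟨s, t, h⟩ := sum_form hm A m (by omega) x
  rw [h]
  ext
  · show (2:ℕ)^(m-1) • s = (0 : ZMod 4)
    rw [nsmul_eq_mul]
    have : (((2:ℕ)^(m-1) : ℕ) : ZMod 4) = 0 := by
      rw [ZMod.natCast_eq_zero_iff]
      have : (2:ℕ)^2 ∣ 2^(m-1) := pow_dvd_pow 2 (by omega)
      simpa using this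
    rw [this, zero_mul]
  · show (2:ℕ)^(m-1) • (2*t) = (0 : ZMod (2^m))
    rw [nsmul_eq_mul]
    have e1 : (((2:ℕ)^(m-1) : ℕ) : ZMod (2^m)) = (2:ZMod (2^m))^(m-1) := by push_cast; ring
    rw [e1]
    have e2 : (2:ZMod (2^m))^(m-1) * 2 = 2^m := by rw [← pow_succ]; congr 1; omega
    have e3 : (2:ZMod (2^m))^m = 0 := by
      rw [show (2:ZMod (2^m))^m = ((2^m : ℕ) : ZMod (2^m)) by push_cast; ring,
        ZMod.natCast_self]
    calc (2:ZMod (2^m))^(m-1) * (2*t) = ((2:ZMod (2^m))^(m-1) * 2) * t := by ring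
      _ = 0 := by rw [e2, e3, zero_mul]
end

/-- The natural action of `AddAut N` on `Multiplicative N`. -/
def holPhi (N : Type) [AddCommGroup N] : AddAut N →* MulAut (Multiplicative N) where
  toFun f := AddEquiv.toMultiplicative f
  map_one' := by ext x; rfl
  map_mul' f g := by ext x; rfl

/-- The holomorph of an abelian group `N`, i.e. the semidirect product `N ⋊ Aut(N)`. -/
abbrev Hol (N : Type) [AddCommGroup N] :=
  SemidirectProduct (Multiplicative N) (AddAut N) (holPhi N)

/-- The action of the holomorph on `N`: `(v, A) • x = v + A x`. -/
def holSmul {N : Type} [AddCommGroup N] (g : Hol N) (x : N) : N :=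
  (Multiplicative.toAdd g.left) + g.right x

/-- A subgroup of `Hol N` is regular if its action on `N` is simply transitive. -/
def IsRegularSubgroup {N : Type} [AddCommGroup N] (G : Subgroup (Hol N)) : Prop :=
  ∀ x y : N, ∃! g : G, holSmul (g : Hol N) x = y

lemma right_pow {N : Type} [AddCommGroup N] (σ : Hol N) (k : ℕ) :
    (σ^k).right = σ.right^k := by
  rw [← SemidirectProduct.rightHom_eq_right]
  exact map_pow (SemidirectProduct.rightHom) σ k

lemma left_pow {N : Type} [AddCommGroup N] (σ : Hol N) (k : ℕ) :
    Multiplicative.toAdd ((σ^k).left)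
      = ∑ i ∈ Finset.range k, ((σ.right^i) (Multiplicative.toAdd σ.left)) := by
  induction k with
  | zero => simp
  | succ k ih =>
    rw [pow_succ, SemidirectProduct.mul_left, toAdd_mul, ih, Finset.sum_range_succ]
    congr 1
    rw [right_pow]
    rfl

lemma reg_pow_eq_one {m : ℕ} (hm : 3 ≤ m) (G : Subgroup (Hol (ZMod 4 × ZMod (2^m))))
    (hreg : IsRegularSubgroup G) (g : G) : g ^ (2^m) = 1 := by
  set σ : Hol (ZMod 4 × ZMod (2^m)) := (g : Hol (ZMod 4 × ZMod (2^m))) with hσ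
  have hleft : ((σ^(2^m)).left) = 1 := by
    have h := left_pow σ (2^m)
    rw [key_sum hm σ.right (Multiplicative.toAdd σ.left)] at h
    rw [← ofAdd_toAdd ((σ^(2^m)).left), h, ofAdd_zero]
  have hfix : holSmul ((σ^(2^m))) 0 = 0 := by
    unfold holSmul
    rw [hleft]
    simp
  obtain ⟨u, -, huniq⟩ := hreg 0 0
  have h1 : holSmul ((1:G) : Hol (ZMod 4 × ZMod (2^m))) 0 = 0 := by
    rw [OneMemClass.coe_one]
    unfold holSmul
    rw [SemidirectProduct.one_left, SemidirectProduct.one_right]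
    simp
  have h2 : holSmul ((g ^ (2^m) : G) : Hol (ZMod 4 × ZMod (2^m))) 0 = 0 := by
    rw [SubgroupClass.coe_pow]
    exact hfix
  rw [huniq (g^(2^m)) h2, huniq 1 h1]

/-- Proposition 7.2: for `n ≥ 5`, the holomorph of `C₄ × C_{2^{n-2}}` contains no
regular quaternion and no regular dihedral subgroup of order `2 ^ n`. -/
theorem no_regular_quaternion_or_dihedral_subgroup_C4_x_C2pow (n : ℕ) (hn : 5 ≤ n) :
    (¬ ∃ G : Subgroup (Hol (ZMod 4 × ZMod (2 ^ (n - 2)))),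
      IsRegularSubgroup G ∧ Nonempty (G ≃* QuaternionGroup (2 ^ (n - 2)))) ∧
    (¬ ∃ G : Subgroup (Hol (ZMod 4 × ZMod (2 ^ (n - 2)))),
      IsRegularSubgroup G ∧ Nonempty (G ≃* DihedralGroup (2 ^ (n - 1)))) := by
  have hm : 3 ≤ n - 2 := by omega
  have hMpos : 0 < 2^(n-2) := Nat.pow_pos (by norm_num)
  constructor
  · rintro ⟨G, hreg, ⟨e⟩⟩
    set g : G := e.symm (QuaternionGroup.a 1) with hg
    have hord : orderOf g = 2 * 2^(n-2) := by
      have h := orderOf_injective e.symm.toMonoidHom e.symm.injective (QuaternionGroup.a 1)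
      simp only [MulEquiv.coe_toMonoidHom] at h
      rw [hg, h]
      exact QuaternionGroup.orderOf_a_one
    have hdvd : orderOf g ∣ 2^(n-2) :=
      orderOf_dvd_of_pow_eq_one (reg_pow_eq_one hm G hreg g)
    rw [hord] at hdvd
    have := Nat.le_of_dvd hMpos hdvd
    omega
  · rintro ⟨G, hreg, ⟨e⟩⟩
    set g : G := e.symm (DihedralGroup.r 1) with hg
    have hord : orderOf g = 2^(n-1) := by
      have h := orderOf_injective e.symm.toMonoidHom e.symm.injective (DihedralGroup.r 1)
      simp only [MulEquiv.coe_toMonoidHom] at h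
      rw [hg, h]
      exact DihedralGroup.orderOf_r_one
    have hdvd : orderOf g ∣ 2^(n-2) :=
      orderOf_dvd_of_pow_eq_one (reg_pow_eq_one hm G hreg g)
    rw [hord] at hdvd
    have h1 : (2:ℕ)^(n-1) = 2 * 2^(n-2) := by
      rw [show n - 1 = (n-2) + 1 by omega, pow_succ]; ring
    rw [h1] at hdvd
    have := Nat.le_of_dvd hMpos hdvd
    omega
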